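/- Let μ be a finite measure on X with total mass m > 0 and K : X → (0,∞) measurable with all relevant powers integrable. For p ≥ 1 and n ≥ 2 (p ≠ -n), define Ω_p = ∫ K^{p/(n+p)} dμ and Ω = Ω_1 = ∫ K^{1/(n+1)} dμ, and set V° = (1/n)∫ K dμ, V = m/n. Then Ω_p^{n+p} / V^{n-p} ≤ n^{p-1} (V·V°)^{p-1} · Ω^{n+1}/V^{n-1}, with equality iff p = 1 or K is constant μ-a.e. -/

import Mathlib

open MeasureTheory
open scoped NNReal ENNReal

theorem stmt1 {X : Type*} [MeasurableSpace X] (μ : Measure X) [IsFiniteMeasure μ]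
    (hm : 0 < (μ Set.univ).toReal)
    (K : X → ℝ) (hKpos : ∀ x, 0 < K x) (hKmeas : Measurable K)
    (n : ℕ) (hn : 2 ≤ n) (p : ℝ) (hp : 1 ≤ p) (hpn : p ≠ -(n : ℝ))
    (hKint : Integrable K μ)
    (hΩp : Integrable (fun x => K x ^ (p / ((n : ℝ) + p))) μ)
    (hΩ : Integrable (fun x => K x ^ ((1 : ℝ) / ((n : ℝ) + 1))) μ) :
    (∫ x, K x ^ (p / ((n : ℝ) + p)) ∂μ) ^ ((n : ℝ) + p) /
        ((μ Set.univ).toReal / n) ^ ((n : ℝ) - p)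
      ≤ (n : ℝ) ^ (p - 1) *
          (((μ Set.univ).toReal / n) * ((1 / (n : ℝ)) * ∫ x, K x ∂μ)) ^ (p - 1) *
          ((∫ x, K x ^ ((1 : ℝ) / ((n : ℝ) + 1)) ∂μ) ^ ((n : ℝ) + 1) /
            ((μ Set.univ).toReal / n) ^ ((n : ℝ) - 1)) ∧
    ((∫ x, K x ^ (p / ((n : ℝ) + p)) ∂μ) ^ ((n : ℝ) + p) /
        ((μ Set.univ).toReal / n) ^ ((n : ℝ) - p)
      = (n : ℝ) ^ (p - 1) *
          (((μ Set.univ).toReal / n) * ((1 / (n : ℝ)) * ∫ x, K x ∂μ)) ^ (p - 1) *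
          ((∫ x, K x ^ ((1 : ℝ) / ((n : ℝ) + 1)) ∂μ) ^ ((n : ℝ) + 1) /
            ((μ Set.univ).toReal / n) ^ ((n : ℝ) - 1)) ↔
      p = 1 ∨ ∃ c : ℝ, ∀ᵐ x ∂μ, K x = c) := by
  have hn2 : (2:ℝ) ≤ (n:ℝ) := by exact_mod_cast hn
  have hn0 : (0:ℝ) < n := by linarith
  have hnp : (0:ℝ) < (n:ℝ) + p := by linarith
  have hn1 : (0:ℝ) < (n:ℝ) + 1 := by linarith
  have hμne : μ ≠ 0 := by
    intro h
    rw [h] at hm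
    simp at hm
  have posint : ∀ f : X → ℝ, (∀ x, 0 < f x) → Integrable f μ → 0 < ∫ x, f x ∂μ := by
    intro f hf hfi
    rw [integral_pos_iff_support_of_nonneg (fun x => (hf x).le) hfi]
    have hs : Function.support f = Set.univ := Set.eq_univ_of_forall fun x => (hf x).ne'
    rw [hs]
    exact (ENNReal.toReal_pos_iff.mp hm).1
  set m := (μ Set.univ).toReal with hmdef
  set A := ∫ x, K x ∂μ with hAdef
  set Om := ∫ x, K x ^ ((1:ℝ)/((n:ℝ)+1)) ∂μ with hOmdef
  set Op := ∫ x, K x ^ (p/((n:ℝ)+p)) ∂μ with hOpdef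
  have hA : 0 < A := posint K hKpos hKint
  have hOm : 0 < Om := posint _ (fun x => Real.rpow_pos_of_pos (hKpos x) _) hΩ
  have hOp : 0 < Op := posint _ (fun x => Real.rpow_pos_of_pos (hKpos x) _) hΩp
  set t := (p-1)/((n:ℝ)+p) with htdef
  have ht0 : 0 ≤ t := div_nonneg (by linarith) hnp.le
  have ht1 : t < 1 := by rw [htdef, div_lt_one hnp]; linarith
  have hmn : 0 < m / n := div_pos hm hn0
  have logeq : ∀ x y : ℝ, 0 < x → 0 < y → Real.log x = Real.log y → x = y :=
    fun x y hx hy h => Real.log_injOn_pos (Set.mem_Ioi.mpr hx) (Set.mem_Ioi.mpr hy) h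
  suffices h : Op ≤ A ^ t * Om ^ (1 - t) ∧
      (Op = A ^ t * Om ^ (1 - t) ↔ (p = 1 ∨ ∃ c : ℝ, ∀ᵐ x ∂μ, K x = c)) by
    obtain ⟨hle, heq⟩ := h
    have hB : 0 < A ^ t * Om ^ (1-t) :=
      mul_pos (Real.rpow_pos_of_pos hA _) (Real.rpow_pos_of_pos hOm _)
    have hLHS : Op ^ ((n:ℝ)+p) / (m/n) ^ ((n:ℝ)-p) = Op ^ ((n:ℝ)+p) * (m/n) ^ (p-(n:ℝ)) := by
      rw [div_eq_mul_inv, ← Real.rpow_neg hmn.le, neg_sub]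
    have hpow : (A ^ t * Om ^ (1-t)) ^ ((n:ℝ)+p) = A ^ (p-1) * Om ^ ((n:ℝ)+1) := by
      rw [Real.mul_rpow (Real.rpow_nonneg hA.le _) (Real.rpow_nonneg hOm.le _),
          ← Real.rpow_mul hA.le, ← Real.rpow_mul hOm.le]
      congr 1
      · congr 1
        rw [htdef]
        field_simp
      · congr 1
        rw [htdef]
        field_simp
        ring
    have hRHS : (n:ℝ) ^ (p-1) * ((m/n) * ((1/(n:ℝ)) * A)) ^ (p-1) *
        (Om ^ ((n:ℝ)+1) / (m/n) ^ ((n:ℝ)-1))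
        = (A ^ t * Om ^ (1-t)) ^ ((n:ℝ)+p) * (m/n) ^ (p-(n:ℝ)) := by
      rw [hpow]
      have h1A : (0:ℝ) < (1/(n:ℝ)) * A := mul_pos (by positivity) hA
      have hB1 : (0:ℝ) < (m/n) * ((1/(n:ℝ)) * A) := mul_pos hmn h1A
      apply logeq
      · exact mul_pos (mul_pos (Real.rpow_pos_of_pos hn0 _) (Real.rpow_pos_of_pos hB1 _))
          (div_pos (Real.rpow_pos_of_pos hOm _) (Real.rpow_pos_of_pos hmn _))
      · exact mul_pos (mul_pos (Real.rpow_pos_of_pos hA _) (Real.rpow_pos_of_pos hOm _))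
          (Real.rpow_pos_of_pos hmn _)
      rw [Real.log_mul (mul_pos (Real.rpow_pos_of_pos hn0 _) (Real.rpow_pos_of_pos hB1 _)).ne'
            (div_pos (Real.rpow_pos_of_pos hOm _) (Real.rpow_pos_of_pos hmn _)).ne',
          Real.log_mul (Real.rpow_pos_of_pos hn0 _).ne' (Real.rpow_pos_of_pos hB1 _).ne',
          Real.log_div (Real.rpow_pos_of_pos hOm _).ne' (Real.rpow_pos_of_pos hmn _).ne',
          Real.log_mul (mul_pos (Real.rpow_pos_of_pos hA _) (Real.rpow_pos_of_pos hOm _)).ne'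
            (Real.rpow_pos_of_pos hmn _).ne',
          Real.log_mul (Real.rpow_pos_of_pos hA _).ne' (Real.rpow_pos_of_pos hOm _).ne',
          Real.log_rpow hn0, Real.log_rpow hB1, Real.log_rpow hOm, Real.log_rpow hmn,
          Real.log_rpow hA,
          Real.log_mul hmn.ne' h1A.ne', Real.log_mul (by positivity : (1/(n:ℝ)) ≠ 0) hA.ne',
          Real.log_div one_ne_zero hn0.ne', Real.log_one, Real.log_rpow hmn]
      ring
    constructor
    · rw [hLHS, hRHS]
      exact mul_le_mul_of_nonneg_right (Real.rpow_le_rpow hOp.le hle hnp.le)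
        (Real.rpow_nonneg hmn.le _)
    · rw [hLHS, hRHS, ← heq]
      constructor
      · intro hEq
        have h2 : Op ^ ((n:ℝ)+p) = (A ^ t * Om ^ (1-t)) ^ ((n:ℝ)+p) :=
          mul_right_cancel₀ (ne_of_gt (Real.rpow_pos_of_pos hmn _)) hEq
        have h3 : ∀ x : ℝ, 0 < x → (x ^ ((n:ℝ)+p)) ^ (((n:ℝ)+p)⁻¹) = x := by
          intro x hx
          rw [← Real.rpow_mul hx.le, mul_inv_cancel₀ hnp.ne', Real.rpow_one]
        calc Op = (Op ^ ((n:ℝ)+p)) ^ (((n:ℝ)+p)⁻¹) := (h3 _ hOp).symm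
          _ = ((A ^ t * Om ^ (1-t)) ^ ((n:ℝ)+p)) ^ (((n:ℝ)+p)⁻¹) := by rw [h2]
          _ = A ^ t * Om ^ (1-t) := h3 _ hB
      · intro hc
        rw [hc]
  haveI : (MeasureTheory.ae μ).NeBot := ae_neBot.mpr hμne
  have hnpne : ((n:ℝ)+p) ≠ 0 := hnp.ne'
  have hn1ne : ((n:ℝ)+1) ≠ 0 := hn1.ne'
  have hconst_eq : ∀ c : ℝ, (∀ᵐ x ∂μ, K x = c) → Op = A ^ t * Om ^ (1 - t) := by
    intro c hc
    have hc0 : 0 < c := by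
      obtain ⟨x, hx⟩ := hc.exists
      rw [← hx]; exact hKpos x
    have hAe : A = m * c := by
      rw [hAdef, integral_congr_ae (μ := μ) (g := fun _ => c) hc, integral_const,
        smul_eq_mul, measureReal_def, ← hmdef]
    have hOme : Om = m * c ^ ((1:ℝ)/((n:ℝ)+1)) := by
      rw [hOmdef, integral_congr_ae (μ := μ) (g := fun _ => c ^ ((1:ℝ)/((n:ℝ)+1)))
        (hc.mono fun x hx => by rw [hx]), integral_const, smul_eq_mul, measureReal_def, ← hmdef]
    have hOpe : Op = m * c ^ (p/((n:ℝ)+p)) := by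
      rw [hOpdef, integral_congr_ae (μ := μ) (g := fun _ => c ^ (p/((n:ℝ)+p)))
        (hc.mono fun x hx => by rw [hx]), integral_const, smul_eq_mul, measureReal_def, ← hmdef]
    rw [hAe, hOme, hOpe]
    apply logeq
    · exact mul_pos hm (Real.rpow_pos_of_pos hc0 _)
    · exact mul_pos (Real.rpow_pos_of_pos (mul_pos hm hc0) _)
        (Real.rpow_pos_of_pos (mul_pos hm (Real.rpow_pos_of_pos hc0 _)) _)
    rw [Real.log_mul hm.ne' (Real.rpow_pos_of_pos hc0 _).ne',
        Real.log_mul (Real.rpow_pos_of_pos (mul_pos hm hc0) _).ne'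
          (Real.rpow_pos_of_pos (mul_pos hm (Real.rpow_pos_of_pos hc0 _)) _).ne',
        Real.log_rpow hc0, Real.log_rpow (mul_pos hm hc0),
        Real.log_rpow (mul_pos hm (Real.rpow_pos_of_pos hc0 _)),
        Real.log_mul hm.ne' hc0.ne',
        Real.log_mul hm.ne' (Real.rpow_pos_of_pos hc0 _).ne', Real.log_rpow hc0, htdef]
    field_simp
    ring
  rcases eq_or_lt_of_le hp with hp1 | hp1
  · -- p = 1
    have ht : t = 0 := by rw [htdef, ← hp1]; norm_num
    have hOpOm : Op = Om := by rw [hOpdef, hOmdef, ← hp1]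
    have heq1 : Op = A ^ t * Om ^ (1 - t) := by
      rw [ht, Real.rpow_zero, one_mul, sub_zero, Real.rpow_one, hOpOm]
    exact ⟨le_of_eq heq1, ⟨fun _ => Or.inl hp1.symm, fun _ => heq1⟩⟩
  · -- 1 < p
    have ht0' : 0 < t := div_pos (by linarith) hnp
    set ρ : X → ℝ≥0 := fun x => Real.toNNReal (K x ^ ((1:ℝ)/((n:ℝ)+1))) with hρdef
    have hρmeas : Measurable ρ :=
      ((Real.continuous_rpow_const (by positivity)).measurable.comp hKmeas).real_toNNReal
    set ν := μ.withDensity (fun x => (ρ x : ℝ≥0∞)) with hνdef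
    have hρcoe : ∀ x, ((ρ x : ℝ≥0) : ℝ) = K x ^ ((1:ℝ)/((n:ℝ)+1)) :=
      fun x => Real.coe_toNNReal _ (Real.rpow_nonneg (hKpos x).le _)
    have hρne : ∀ x, ((ρ x : ℝ≥0) : ℝ≥0∞) ≠ 0 := fun x =>
      ENNReal.coe_ne_zero.mpr (Real.toNNReal_pos.mpr (Real.rpow_pos_of_pos (hKpos x) _)).ne'
    haveI hfin : IsFiniteMeasure ν := by
      rw [hνdef]
      exact isFiniteMeasure_withDensity hΩ.lintegral_lt_top.ne
    have htrans : ∀ g : X → ℝ, ∫ x, g x ∂ν = ∫ x, K x ^ ((1:ℝ)/((n:ℝ)+1)) * g x ∂μ := by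
      intro g
      rw [hνdef, integral_withDensity_eq_integral_smul hρmeas]
      refine integral_congr_ae (Filter.Eventually.of_forall fun x => ?_)
      simp only [NNReal.smul_def, hρcoe x, smul_eq_mul]
    have hcomb : ∀ (b : ℝ) (x : X),
        K x ^ ((1:ℝ)/((n:ℝ)+1)) * (K x ^ ((n:ℝ)/((n:ℝ)+1))) ^ b
          = K x ^ ((1 + (n:ℝ)*b)/((n:ℝ)+1)) := by
      intro b x
      rw [← Real.rpow_mul (hKpos x).le, ← Real.rpow_add (hKpos x)]
      congr 1
      field_simp
    have hexp1 : (1+(n:ℝ)*1)/((n:ℝ)+1) = 1 := by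
      rw [mul_one, add_comm]; exact div_self hn1ne
    have hcomb1 : ∀ x : X, K x ^ ((1:ℝ)/((n:ℝ)+1)) * K x ^ ((n:ℝ)/((n:ℝ)+1)) = K x := by
      intro x
      have h := hcomb 1 x
      rw [Real.rpow_one] at h
      rw [h, hexp1, Real.rpow_one]
    have hexpt : ∀ x : X,
        K x ^ ((1:ℝ)/((n:ℝ)+1)) * (K x ^ ((n:ℝ)/((n:ℝ)+1))) ^ t = K x ^ (p/((n:ℝ)+p)) := by
      intro x
      rw [hcomb t x]
      congr 1
      rw [htdef]
      field_simp
      ring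
    have hint1 : Integrable (fun x => K x ^ ((n:ℝ)/((n:ℝ)+1))) ν := by
      rw [hνdef, integrable_withDensity_iff_integrable_smul hρmeas]
      refine hKint.congr (Filter.Eventually.of_forall fun x => ?_)
      simp only [NNReal.smul_def, hρcoe x, smul_eq_mul, hcomb1 x]
    have hint2 : Integrable (fun x => (K x ^ ((n:ℝ)/((n:ℝ)+1))) ^ t) ν := by
      rw [hνdef, integrable_withDensity_iff_integrable_smul hρmeas]
      refine hΩp.congr (Filter.Eventually.of_forall fun x => ?_)
      simp only [NNReal.smul_def, hρcoe x, smul_eq_mul, hexpt x]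
    have hνuniv : (ν Set.univ).toReal = Om := by
      have h1 : ∫ x, (1:ℝ) ∂ν = (ν Set.univ).toReal := by
        rw [integral_const, smul_eq_mul, mul_one, measureReal_def]
      rw [← h1, htrans]
      simp only [mul_one]
      exact hOmdef.symm
    have hI_f : ∫ x, K x ^ ((n:ℝ)/((n:ℝ)+1)) ∂ν = A := by
      rw [htrans, hAdef]
      exact integral_congr_ae (Filter.Eventually.of_forall fun x => hcomb1 x)
    have hI_ft : ∫ x, (K x ^ ((n:ℝ)/((n:ℝ)+1))) ^ t ∂ν = Op := by
      rw [htrans, hOpdef]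
      exact integral_congr_ae (Filter.Eventually.of_forall fun x => hexpt x)
    have hJ := StrictConcaveOn.ae_eq_const_or_lt_map_average
      (μ := ν) (f := fun x => K x ^ ((n:ℝ)/((n:ℝ)+1)))
      (Real.strictConcaveOn_rpow ht0' ht1)
      ((Real.continuous_rpow_const ht0'.le).continuousOn) isClosed_Ici
      (Filter.Eventually.of_forall fun x => Set.mem_Ici.mpr (Real.rpow_nonneg (hKpos x).le _))
      hint1 hint2
    have havg_f : ⨍ x, K x ^ ((n:ℝ)/((n:ℝ)+1)) ∂ν = Om⁻¹ * A := by
      rw [average_eq, measureReal_def, hνuniv, hI_f, smul_eq_mul]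
    have havg_ft : ⨍ x, (K x ^ ((n:ℝ)/((n:ℝ)+1))) ^ t ∂ν = Om⁻¹ * Op := by
      rw [average_eq, measureReal_def, hνuniv, hI_ft, smul_eq_mul]
    have halg : Om * (Om⁻¹ * A) ^ t = A ^ t * Om ^ (1 - t) := by
      apply logeq
      · exact mul_pos hOm (Real.rpow_pos_of_pos (mul_pos (inv_pos.mpr hOm) hA) _)
      · exact mul_pos (Real.rpow_pos_of_pos hA _) (Real.rpow_pos_of_pos hOm _)
      rw [Real.log_mul hOm.ne' (Real.rpow_pos_of_pos (mul_pos (inv_pos.mpr hOm) hA) _).ne',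
          Real.log_rpow (mul_pos (inv_pos.mpr hOm) hA),
          Real.log_mul (inv_ne_zero hOm.ne') hA.ne', Real.log_inv,
          Real.log_mul (Real.rpow_pos_of_pos hA _).ne' (Real.rpow_pos_of_pos hOm _).ne',
          Real.log_rpow hA, Real.log_rpow hOm]
      ring
    rcases hJ with hconst | hlt
    · -- constant case
      have hKconst : ∀ᵐ x ∂μ,
          K x = (⨍ x, K x ^ ((n:ℝ)/((n:ℝ)+1)) ∂ν) ^ (((n:ℝ)/((n:ℝ)+1)))⁻¹ := by
        have h2 : ∀ᵐ x ∂μ, ((ρ x : ℝ≥0) : ℝ≥0∞) ≠ 0 →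
            K x ^ ((n:ℝ)/((n:ℝ)+1)) = ⨍ x, K x ^ ((n:ℝ)/((n:ℝ)+1)) ∂ν := by
          rw [← ae_withDensity_iff hρmeas.coe_nnreal_ennreal, ← hνdef]
          exact hconst
        refine h2.mono fun x hx => ?_
        have h3 := hx (hρne x)
        have ha : ((n:ℝ)/((n:ℝ)+1)) ≠ 0 := div_ne_zero hn0.ne' hn1ne
        rw [← h3, ← Real.rpow_mul (hKpos x).le, mul_inv_cancel₀ ha, Real.rpow_one]
      exact ⟨le_of_eq (hconst_eq _ hKconst),
        ⟨fun _ => Or.inr ⟨_, hKconst⟩, fun _ => hconst_eq _ hKconst⟩⟩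
    · -- strict case
      have hlt' : Op < A ^ t * Om ^ (1 - t) := by
        rw [havg_ft, havg_f] at hlt
        have h4 := (mul_lt_mul_iff_right₀ hOm).mpr hlt
        rw [← mul_assoc, mul_inv_cancel₀ hOm.ne', one_mul, halg] at h4
        exact h4
      exact ⟨hlt'.le, ⟨fun hEq => absurd hEq hlt'.ne, fun hc => by
        rcases hc with hc1 | ⟨c, hc⟩
        · exact absurd hc1 (by linarith)
        · exact absurd (hconst_eq c hc) hlt'.ne⟩⟩
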